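/- Let T, m, d be positive natural numbers, let x be a T × d real matrix, C an m × d real matrix, W_q, W_k, W_v be d × d real matrices, v ∈ ℝ^d, and let e_T ∈ ℝ^T and e_m ∈ ℝ^m be the indicator vectors of the last position. Set Q = x * W_q, P_q' = (e_T vᵀ) * W_q, K_C = C * W_k, P_k' = (e_m vᵀ) * W_k, V_C = C * W_v, P_v' = (e_m vᵀ) * W_v. Then the linearized ATV attention equals the linearized prefix-tuned attention with the induced single-row prefixes P_k', P_v', plus an explicit cross-term correction: ((x + e_T vᵀ) * W_q) * ((C + e_m vᵀ) * W_k)ᵀ * ((C + e_m vᵀ) * W_v) − ( Q * (fromRows P_k' (C * W_k))ᵀ * (fromRows P_v' (C * W_v)) ) = Q P_k'ᵀ V_C + Q K_Cᵀ P_v' + P_q' K_Cᵀ V_C + P_q' P_k'ᵀ V_C + P_q' K_Cᵀ P_v' + P_q' P_k'ᵀ P_v'; in particular every linearized prefix-tuned output arising from prefixes of this induced form is realized by the linearized ATV attention when the six cross terms cancel, so the prefix-tuned term Q P_k'ᵀ P_v' + Q K_Cᵀ V_C always appears as a subexpression of the ATV expansion. -/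
import Mathlib

open Matrix

/-- **Linearized ATV attention = prefix-tuned attention + six cross terms.**
With linearized attention `Attn(Q,K,V) = Q Kᵀ V`, the ATV attention (injecting `v` into the
last rows via the indicator vectors `e_T`, `e_m`) differs from the prefix-tuned attention
built from the induced prefixes `P_k' = (e_m vᵀ) W_k`, `P_v' = (e_m vᵀ) W_v` exactly by the
six cross terms; in particular the prefix-tuned term `Q P_k'ᵀ P_v' + Q K_Cᵀ V_C` always
appears as a subexpression of the ATV expansion. -/
theorem atv_attention_eq_prefix_plus_cross_terms (T m d : ℕ)
    (hT : 0 < T) (hm : 0 < m) (hd : 0 < d)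
    (x : Matrix (Fin T) (Fin d) ℝ) (C : Matrix (Fin m) (Fin d) ℝ)
    (Wq Wk Wv : Matrix (Fin d) (Fin d) ℝ) (v : Fin d → ℝ)
    (eT : Fin T → ℝ) (em : Fin m → ℝ)
    (heT : eT = fun i => if i.val = T - 1 then 1 else 0)
    (hem : em = fun i => if i.val = m - 1 then 1 else 0)
    (Q Pq' : Matrix (Fin T) (Fin d) ℝ)
    (KC Pk' VC Pv' : Matrix (Fin m) (Fin d) ℝ)
    (hQ : Q = x * Wq) (hPq : Pq' = Matrix.vecMulVec eT v * Wq)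
    (hKC : KC = C * Wk) (hPk : Pk' = Matrix.vecMulVec em v * Wk)
    (hVC : VC = C * Wv) (hPv : Pv' = Matrix.vecMulVec em v * Wv) :
    ((x + Matrix.vecMulVec eT v) * Wq) * ((C + Matrix.vecMulVec em v) * Wk)ᵀ *
          ((C + Matrix.vecMulVec em v) * Wv)
        - (Q * (Matrix.fromRows Pk' (C * Wk))ᵀ * (Matrix.fromRows Pv' (C * Wv)))
      = Q * Pk'ᵀ * VC + Q * KCᵀ * Pv'
        + Pq' * KCᵀ * VC + Pq' * Pk'ᵀ * VC + Pq' * KCᵀ * Pv' + Pq' * Pk'ᵀ * Pv' := by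
  have h1 : (x + Matrix.vecMulVec eT v) * Wq = Q + Pq' := by
    rw [hQ, hPq, Matrix.add_mul]
  have h2 : (C + Matrix.vecMulVec em v) * Wk = KC + Pk' := by
    rw [hKC, hPk, Matrix.add_mul]
  have h3 : (C + Matrix.vecMulVec em v) * Wv = VC + Pv' := by
    rw [hVC, hPv, Matrix.add_mul]
  have h4 : Q * (Matrix.fromRows Pk' (C * Wk))ᵀ * (Matrix.fromRows Pv' (C * Wv))
      = Q * Pk'ᵀ * Pv' + Q * KCᵀ * VC := by
    rw [Matrix.transpose_fromRows, Matrix.mul_assoc,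
      Matrix.fromCols_mul_fromRows, ← hKC, ← hVC, Matrix.mul_add,
      ← Matrix.mul_assoc, ← Matrix.mul_assoc]
  rw [h1, h2, h3, h4]
  simp only [Matrix.add_mul, Matrix.mul_add, Matrix.transpose_add]
  abel
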